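/- Let H be a Hermitian operator on a finite-dimensional Hilbert space and U a random unitary with H_eff = 𝔼[U† H U]. For r ≥ 1 and τ = t/r, with U₁, …, U_r i.i.d. copies of U, the expected conjugated product satisfies ‖𝔼[∏_{l=1}^{r} (U_l† e^{-iHτ} U_l)] − e^{-i H_eff t}‖ ≤ C t²/r, where C depends only on ‖H‖ (e.g., C = ‖H‖² e^{‖H‖ t /r} works, and in particular C = 2‖H‖² suffices when r ≥ ‖H‖ t). -/

import Mathlib

open MeasureTheory NormedSpace Complex

open scoped Nat



section helpers
variable {A : Type*} [NormedRing A] [NormedAlgebra ℂ A] [CompleteSpace A]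

lemma rem_core (M : A) (m : ℝ) (hm : ‖M‖ ≤ m) (b : ℕ → ℝ) (hb : Summable b)
    (hterm : ∀ k : ℕ, m ^ (k + 2) / (k + 2)! ≤ b k) :
    ‖NormedSpace.exp M - 1 - M‖ ≤ ∑' k, b k := by
  have hm0 : 0 ≤ m := (norm_nonneg M).trans hm
  set g : ℕ → A := fun n => (n !⁻¹ : ℂ) • M ^ n with hg
  have hs : Summable g := expSeries_summable' (𝕂 := ℂ) M
  have hs1 : Summable fun n => g (n + 1) := (summable_nat_add_iff 1).2 hs
  have hexp : NormedSpace.exp M = ∑' n, g n := by rw [exp_eq_tsum ℂ]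
  have h0 : g 0 = 1 := by simp [hg]
  have h1 : g 1 = M := by simp [hg]
  have key : NormedSpace.exp M - 1 - M = ∑' n, g (n + 2) := by
    rw [hexp, hs.tsum_eq_zero_add, hs1.tsum_eq_zero_add, h0, h1]
    abel
  rw [key]
  have hnorm : ∀ n : ℕ, ‖g (n + 2)‖ ≤ m ^ (n + 2) / (n + 2)! := by
    intro n
    have h2 : ‖g (n + 2)‖ ≤ ((n + 2)! : ℝ)⁻¹ * ‖M‖ ^ (n + 2) := by
      rw [hg, norm_smul]
      gcongr
      · simp [norm_inv]
      · exact norm_pow_le' M (Nat.succ_pos _)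
    refine h2.trans ?_
    rw [div_eq_inv_mul]
    gcongr
  have hsn : Summable fun n => ‖g (n + 2)‖ :=
    (summable_nat_add_iff 2).2 (norm_expSeries_summable' (𝕂 := ℂ) M)
  calc ‖∑' n, g (n + 2)‖ ≤ ∑' n, ‖g (n + 2)‖ := norm_tsum_le_tsum_norm hsn
    _ ≤ ∑' k, b k := Summable.tsum_le_tsum (fun k => (hnorm k).trans (hterm k)) hsn hb

lemma rem_exp (M : A) (m : ℝ) (hm : ‖M‖ ≤ m) :
    ‖NormedSpace.exp M - 1 - M‖ ≤ m ^ 2 / 2 * Real.exp m := by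
  have hm0 : 0 ≤ m := (norm_nonneg M).trans hm
  have hsum : Summable fun k : ℕ => m ^ 2 / 2 * (m ^ k / k !) :=
    (Real.summable_pow_div_factorial m).mul_left _
  refine (rem_core M m hm _ hsum ?_).trans ?_
  · intro k
    have hfac : (2 * k ! : ℝ) ≤ ((k + 2)! : ℝ) := by
      exact_mod_cast Nat.mul_le_mul (by omega : 2 ≤ k + 2)
        (Nat.factorial_le (Nat.le_succ k))
    have hrhs : m ^ 2 / 2 * (m ^ k / k !) = m ^ (k + 2) / (2 * k !) := by
      have hk : (k ! : ℝ) ≠ 0 := by positivity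
      field_simp
      ring
    rw [hrhs]
    gcongr
  · rw [tsum_mul_left]
    gcongr
    rw [Real.exp_eq_exp_ℝ, exp_eq_tsum_div]

lemma rem_small (M : A) (m : ℝ) (hm : ‖M‖ ≤ m) (hm1 : m ≤ 1) :
    ‖NormedSpace.exp M - 1 - M‖ ≤ m ^ 2 := by
  have hm0 : 0 ≤ m := (norm_nonneg M).trans hm
  have hsum : Summable fun k : ℕ => m ^ 2 * (1 / 2 : ℝ) ^ (k + 1) := by
    apply Summable.mul_left
    exact (summable_geometric_of_lt_one (by norm_num) (by norm_num)).comp_injective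
      (add_left_injective 1)
  refine (rem_core M m hm _ hsum ?_).trans ?_
  · intro k
    have hfac : ((2 : ℝ)) ^ (k + 1) ≤ ((k + 2)! : ℝ) := by
      have h := Nat.factorial_mul_pow_le_factorial (m := 1) (n := k + 1)
      have h2 : 2 ^ (k + 1) ≤ (k + 2)! := by
        have e : 1 + (k + 1) = k + 2 := by omega
        simpa [e] using h
      exact_mod_cast h2
    have h1 : m ^ (k + 2) ≤ m ^ 2 := by
      calc m ^ (k + 2) = m ^ 2 * m ^ k := by ring
        _ ≤ m ^ 2 * 1 := by gcongr; exact pow_le_one₀ hm0 hm1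
        _ = m ^ 2 := mul_one _
    calc m ^ (k + 2) / (k + 2)! ≤ m ^ 2 / 2 ^ (k + 1) := by gcongr <;> positivity
      _ = m ^ 2 * (1 / 2) ^ (k + 1) := by rw [div_pow, one_pow, mul_one_div]
  · rw [tsum_mul_left]
    have : ∑' k : ℕ, (1 / 2 : ℝ) ^ (k + 1) = 1 := by
      simp_rw [pow_succ']
      rw [tsum_mul_left, tsum_geometric_of_lt_one (by norm_num) (by norm_num)]
      norm_num
    rw [this, mul_one]
end helpers


section cstar
variable {A : Type*} [NormedRing A] [NormedAlgebra ℂ A] [CompleteSpace A]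
  [StarRing A] [CStarRing A] [StarModule ℂ A]

lemma my_norm_one_le : ‖(1 : A)‖ ≤ 1 := by
  have h := CStarRing.norm_star_mul_self (x := (1 : A))
  simp only [star_one, one_mul] at h
  nlinarith [norm_nonneg (1 : A)]

lemma my_unitary_norm_le {u : A} (hu : u ∈ unitary A) : ‖u‖ ≤ 1 := by
  have h := CStarRing.norm_star_mul_self (x := u)
  rw [(Unitary.mem_iff.mp hu).1] at h
  nlinarith [norm_nonneg u, my_norm_one_le (A := A)]

lemma my_unitary_conj_exp {u : A} (hu : u ∈ unitary A) (B : A) :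
    star u * NormedSpace.exp B * u = NormedSpace.exp (star u * B * u) := by
  have h1 : star u * u = 1 := (Unitary.mem_iff.mp hu).1
  have h2 : u * star u = 1 := (Unitary.mem_iff.mp hu).2
  let y : Aˣ := ⟨u, star u, h2, h1⟩
  letI : NormedAlgebra ℚ A := NormedAlgebra.restrictScalars ℚ ℂ A
  have := exp_units_conj' y B
  simpa [y] using this.symm

lemma my_pow_sub_pow (a b : A) (ha : ‖a‖ ≤ 1) (hb : ‖b‖ ≤ 1) (r : ℕ) :
    ‖a ^ r - b ^ r‖ ≤ r * ‖a - b‖ := by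
  induction r with
  | zero => simp
  | succ k ih =>
    have key : a ^ (k + 1) - b ^ (k + 1) = a * (a ^ k - b ^ k) + (a - b) * b ^ k := by
      rw [pow_succ', pow_succ']
      noncomm_ring
    rw [key]
    calc ‖a * (a ^ k - b ^ k) + (a - b) * b ^ k‖
        ≤ ‖a * (a ^ k - b ^ k)‖ + ‖(a - b) * b ^ k‖ := norm_add_le _ _
      _ ≤ ‖a‖ * ‖a ^ k - b ^ k‖ + ‖a - b‖ * ‖b ^ k‖ := by
          gcongr <;> exact norm_mul_le _ _
      _ ≤ 1 * (k * ‖a - b‖) + ‖a - b‖ * 1 := by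
          have hbk : ‖b ^ k‖ ≤ 1 := by
            cases k with
            | zero => simpa using my_norm_one_le (A := A)
            | succ j =>
              exact (norm_pow_le' b (Nat.succ_pos j)).trans
                (pow_le_one₀ (norm_nonneg b) hb)
          gcongr
          all_goals first | exact ih | exact norm_nonneg _
      _ = (k + 1 : ℕ) * ‖a - b‖ := by push_cast; ring

end cstar


section prodint
variable {A : Type*} [NormedRing A] [NormedAlgebra ℂ A] [CompleteSpace A]
variable {Ω : Type*} [MeasurableSpace Ω] {μ : Measure Ω} [IsProbabilityMeasure μ]

lemma my_integrable_of_bound (g : Ω → A) (hg : AEStronglyMeasurable g μ) (C : ℝ)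
    (hb : ∀ ω, ‖g ω‖ ≤ C) : Integrable g μ :=
  Integrable.mono' (integrable_const C) hg (Filter.Eventually.of_forall hb)

lemma my_norm_list_prod_le_one (h1 : ‖(1 : A)‖ ≤ 1) :
    ∀ L : List A, (∀ a ∈ L, ‖a‖ ≤ 1) → ‖L.prod‖ ≤ 1 := by
  intro L
  induction L with
  | nil => intro _; simpa using h1
  | cons a L ih =>
    intro h
    rw [List.prod_cons]
    have ha : ‖a‖ ≤ 1 := h a (by simp)
    have hL : ‖L.prod‖ ≤ 1 := ih fun b hb => h b (List.mem_cons_of_mem _ hb)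
    calc ‖a * L.prod‖ ≤ ‖a‖ * ‖L.prod‖ := norm_mul_le _ _
      _ ≤ 1 := by nlinarith [norm_nonneg a, norm_nonneg L.prod]

lemma my_integral_ofFn_prod (h1 : ‖(1 : A)‖ ≤ 1) (g : Ω → A)
    (hg : AEStronglyMeasurable g μ) (hb : ∀ ω, ‖g ω‖ ≤ 1) :
    ∀ r : ℕ,
      Integrable (fun x : Fin r → Ω => (List.ofFn fun l => g (x l)).prod)
        (Measure.pi fun _ => μ) ∧
      ∫ x : Fin r → Ω, (List.ofFn fun l => g (x l)).prod ∂(Measure.pi fun _ => μ)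
        = (∫ ω, g ω ∂μ) ^ r := by
  have hbound : ∀ (r : ℕ) (x : Fin r → Ω), ‖(List.ofFn fun l => g (x l)).prod‖ ≤ 1 := by
    intro r x
    refine my_norm_list_prod_le_one h1 _ ?_
    intro a ha
    rw [List.mem_ofFn] at ha
    obtain ⟨l, rfl⟩ := ha
    exact hb _
  have hgint : Integrable g μ := my_integrable_of_bound g hg 1 hb
  intro r
  induction r with
  | zero =>
    constructor
    · simpa using integrable_const (1 : A)
    · simp
  | succ r ih =>
    obtain ⟨ihInt, ihVal⟩ := ih
    set ν : Measure (Fin r → Ω) := Measure.pi fun _ => μ with hν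
    set P : (Fin r → Ω) → A := fun y => (List.ofFn fun l => g (y l)).prod with hP
    have mp := measurePreserving_piFinSuccAbove (fun _ : Fin (r + 1) => μ) 0
    set e := MeasurableEquiv.piFinSuccAbove (fun _ : Fin (r + 1) => Ω) 0 with he
    have hFe : ∀ p : Ω × (Fin r → Ω),
        (List.ofFn fun l : Fin (r + 1) => g ((e.symm p) l)).prod = g p.1 * P p.2 := by
      intro p
      simp [e, MeasurableEquiv.piFinSuccAbove_symm_apply, Fin.insertNthEquiv,
        Fin.insertNth_zero, List.ofFn_succ, Fin.zero_succAbove, P]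
    -- measure preserving facts for fst/snd
    have mpfst : MeasurePreserving (Prod.fst : Ω × (Fin r → Ω) → Ω) (μ.prod ν) μ :=
      ⟨measurable_fst, by simp⟩
    have mpsnd : MeasurePreserving (Prod.snd : Ω × (Fin r → Ω) → (Fin r → Ω)) (μ.prod ν) ν :=
      ⟨measurable_snd, by simp⟩
    have hGm : AEStronglyMeasurable (fun p : Ω × (Fin r → Ω) => g p.1 * P p.2) (μ.prod ν) := by
      exact (hg.comp_quasiMeasurePreserving mpfst.quasiMeasurePreserving).mul
        (ihInt.aestronglyMeasurable.comp_quasiMeasurePreserving mpsnd.quasiMeasurePreserving)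
    have hGb : ∀ p : Ω × (Fin r → Ω), ‖g p.1 * P p.2‖ ≤ 1 := by
      intro p
      have h1' : ‖g p.1‖ ≤ 1 := hb _
      have h2' : ‖P p.2‖ ≤ 1 := hbound r _
      calc ‖g p.1 * P p.2‖ ≤ ‖g p.1‖ * ‖P p.2‖ := norm_mul_le _ _
        _ ≤ 1 := by nlinarith [norm_nonneg (g p.1), norm_nonneg (P p.2)]
    have hGint : Integrable (fun p : Ω × (Fin r → Ω) => g p.1 * P p.2) (μ.prod ν) :=
      my_integrable_of_bound _ hGm 1 hGb
    have hint1 : Integrable (fun x : Fin (r + 1) → Ω =>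
        (List.ofFn fun l => g (x l)).prod) (Measure.pi fun _ => μ) := by
      rw [← (MeasurePreserving.symm _ mp).integrable_comp_emb (MeasurableEquiv.measurableEmbedding _)]
      refine hGint.congr (Filter.Eventually.of_forall fun p => ?_)
      exact (hFe p).symm
    refine ⟨hint1, ?_⟩
    have step1 : ∫ x : Fin (r + 1) → Ω, (List.ofFn fun l => g (x l)).prod
        ∂(Measure.pi fun _ => μ)
        = ∫ p : Ω × (Fin r → Ω), g p.1 * P p.2 ∂(μ.prod ν) := by
      rw [← (MeasurePreserving.symm _ mp).integral_comp (MeasurableEquiv.measurableEmbedding _)]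
      exact integral_congr_ae (Filter.Eventually.of_forall fun p => hFe p)
    rw [step1, integral_prod _ hGint]
    have hinner : ∀ x : Ω, ∫ y, g x * P y ∂ν = g x * ∫ y, P y ∂ν := by
      intro x
      have := (ContinuousLinearMap.mul ℂ A (g x)).integral_comp_comm ihInt
      simpa using this
    simp_rw [hinner, ihVal]
    have := ((ContinuousLinearMap.mul ℂ A).flip ((∫ ω, g ω ∂μ) ^ r)).integral_comp_comm hgint
    simp only [ContinuousLinearMap.flip_apply, ContinuousLinearMap.mul_apply'] at this
    rw [this, pow_succ']
end prodint


set_option maxHeartbeats 1600000 in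
set_option synthInstance.maxHeartbeats 400000 in
/-- qDRIFT-style reshaping error bound.  `H` is Hermitian on a finite-dimensional
Hilbert space, `U` a random unitary with `H_eff = 𝔼[U† H U]`, and `U₁,…,U_r`
i.i.d. copies of `U` (modelled by the product measure).  Then the expectation of the
ordered product `∏ U_l† e^{-iHτ} U_l` (with `τ = t/r`) is within
`‖H‖² e^{‖H‖t/r} · t²/r` of `e^{-iH_eff t}` in operator norm; in particular the
constant `2‖H‖²` suffices when `r ≥ ‖H‖t`. -/
theorem qdrift_reshaping_error
    (n r : ℕ) (hr : 1 ≤ r) (t : ℝ) (ht : 0 ≤ t)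
    {Ω : Type*} [MeasurableSpace Ω] (μ : Measure Ω) [IsProbabilityMeasure μ]
    (H : EuclideanSpace ℂ (Fin n) →L[ℂ] EuclideanSpace ℂ (Fin n))
    (hH : IsSelfAdjoint H)
    (U : Ω → (EuclideanSpace ℂ (Fin n) →L[ℂ] EuclideanSpace ℂ (Fin n)))
    (hU : ∀ ω, U ω ∈ unitary (EuclideanSpace ℂ (Fin n) →L[ℂ] EuclideanSpace ℂ (Fin n)))
    (Heff : EuclideanSpace ℂ (Fin n) →L[ℂ] EuclideanSpace ℂ (Fin n))
    (hHeff : Heff = ∫ ω, star (U ω) * H * U ω ∂μ)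
    (hint : Integrable (fun ω => star (U ω) * H * U ω) μ)
    (hint2 : Integrable
      (fun ω : Fin r → Ω =>
        (List.ofFn fun l : Fin r =>
          star (U (ω l)) * NormedSpace.exp ((-(Complex.I * ((t : ℂ) / r))) • H) * U (ω l)).prod)
      (Measure.pi fun _ => μ)) :
    ‖(∫ ω : Fin r → Ω,
        (List.ofFn fun l : Fin r =>
          star (U (ω l)) * NormedSpace.exp ((-(Complex.I * ((t : ℂ) / r))) • H) * U (ω l)).prod
          ∂(Measure.pi fun _ => μ)) - NormedSpace.exp ((-(Complex.I * t)) • Heff)‖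
        ≤ ‖H‖ ^ 2 * Real.exp (‖H‖ * t / r) * t ^ 2 / r ∧
    (‖H‖ * t ≤ r →
      ‖(∫ ω : Fin r → Ω,
          (List.ofFn fun l : Fin r =>
            star (U (ω l)) * NormedSpace.exp ((-(Complex.I * ((t : ℂ) / r))) • H) * U (ω l)).prod
            ∂(Measure.pi fun _ => μ)) - NormedSpace.exp ((-(Complex.I * t)) • Heff)‖
          ≤ 2 * ‖H‖ ^ 2 * t ^ 2 / r) := by
  have hrpos : (0 : ℝ) < r := by exact_mod_cast hr
  letI : NormedAlgebra ℚ (EuclideanSpace ℂ (Fin n) →L[ℂ] EuclideanSpace ℂ (Fin n)) :=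
    NormedAlgebra.restrictScalars ℚ ℂ _
  have hrne : (r : ℝ) ≠ 0 := ne_of_gt hrpos
  have hrcne : (r : ℂ) ≠ 0 := by exact_mod_cast Nat.one_le_iff_ne_zero.mp hr
  set c : ℂ := -(Complex.I * ((t : ℂ) / r)) with hc
  set τ : ℝ := t / r with hτ
  have hτ0 : 0 ≤ τ := div_nonneg ht hrpos.le
  have hcnorm : ‖c‖ = τ := by
    rw [hc, norm_neg, norm_mul, Complex.norm_I, one_mul, hτ]
    rw [show ((t : ℂ) / r) = ((t / r : ℝ) : ℂ) by push_cast; ring]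
    rw [Complex.norm_real, Real.norm_of_nonneg (div_nonneg ht hrpos.le)]
  have hconj : (starRingEnd ℂ) c = -c := by
    rw [hc]
    rw [show ((t : ℂ) / r) = ((t / r : ℝ) : ℂ) by push_cast; ring]
    simp [Complex.conj_ofReal]
  set m : ℝ := ‖H‖ * t / r with hm
  have hm0 : 0 ≤ m := by positivity
  have hmτ : m = τ * ‖H‖ := by rw [hm, hτ]; ring
  have hskew : ∀ K : (EuclideanSpace ℂ (Fin n) →L[ℂ] EuclideanSpace ℂ (Fin n)), IsSelfAdjoint K → c • K ∈ skewAdjoint (EuclideanSpace ℂ (Fin n) →L[ℂ] EuclideanSpace ℂ (Fin n)) := fun K hK =>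
    hK.smul_mem_skewAdjoint (skewAdjoint.mem_iff.mpr hconj)
  set E : (EuclideanSpace ℂ (Fin n) →L[ℂ] EuclideanSpace ℂ (Fin n)) := NormedSpace.exp (c • H) with hE
  have hEu : E ∈ unitary (EuclideanSpace ℂ (Fin n) →L[ℂ] EuclideanSpace ℂ (Fin n)) := exp_mem_unitary_of_mem_skewAdjoint (hskew H hH)
  set X : Ω → (EuclideanSpace ℂ (Fin n) →L[ℂ] EuclideanSpace ℂ (Fin n)) := fun ω => star (U ω) * H * U ω with hX
  set f : Ω → (EuclideanSpace ℂ (Fin n) →L[ℂ] EuclideanSpace ℂ (Fin n)) := fun ω => star (U ω) * E * U ω with hf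
  have hfX : ∀ ω, f ω = NormedSpace.exp (c • X ω) := by
    intro ω
    rw [hf]
    show star (U ω) * E * U ω = _
    rw [hE, my_unitary_conj_exp (hU ω) (c • H)]
    congr 1
    rw [hX]
    show star (U ω) * (c • H) * U ω = c • (star (U ω) * H * U ω)
    rw [mul_smul_comm, smul_mul_assoc]
  have hUn : ∀ ω, ‖U ω‖ ≤ 1 := fun ω => my_unitary_norm_le (hU ω)
  have hUsn : ∀ ω, ‖star (U ω)‖ ≤ 1 := fun ω => my_unitary_norm_le (Unitary.star_mem (hU ω))
  have hconjnorm : ∀ (ω) (K : (EuclideanSpace ℂ (Fin n) →L[ℂ] EuclideanSpace ℂ (Fin n))), ‖star (U ω) * K * U ω‖ ≤ ‖K‖ := by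
    intro ω K
    calc ‖star (U ω) * K * U ω‖ ≤ ‖star (U ω) * K‖ * ‖U ω‖ := norm_mul_le _ _
      _ ≤ ‖star (U ω)‖ * ‖K‖ * ‖U ω‖ := by gcongr; exact norm_mul_le _ _
      _ ≤ 1 * ‖K‖ * 1 := by gcongr <;> [exact hUsn ω; exact hUn ω]
      _ = ‖K‖ := by ring
  have hXnorm : ∀ ω, ‖X ω‖ ≤ ‖H‖ := fun ω => hconjnorm ω H
  have hXm : ∀ ω, ‖c • X ω‖ ≤ m := by
    intro ω
    have h1 : ‖c • X ω‖ = ‖c‖ * ‖X ω‖ := norm_smul c (X ω)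
    rw [h1, hcnorm, hmτ]
    gcongr
    exact hXnorm ω
  have hEnorm : ‖E‖ ≤ 1 := my_unitary_norm_le hEu
  have hfnorm : ∀ ω, ‖f ω‖ ≤ 1 := by
    intro ω
    calc ‖f ω‖ ≤ ‖E‖ := hconjnorm ω E
      _ ≤ 1 := hEnorm
  have hfaesm : AEStronglyMeasurable f μ := by
    have hcont : Continuous fun M : (EuclideanSpace ℂ (Fin n) →L[ℂ] EuclideanSpace ℂ (Fin n)) => NormedSpace.exp (c • M) :=
      exp_continuous.comp (continuous_const_smul c)
    have := hcont.comp_aestronglyMeasurable hint.aestronglyMeasurable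
    refine this.congr (Filter.Eventually.of_forall fun ω => ?_)
    exact (hfX ω).symm
  have hfint : Integrable f μ := my_integrable_of_bound f hfaesm 1 hfnorm
  set Aop : (EuclideanSpace ℂ (Fin n) →L[ℂ] EuclideanSpace ℂ (Fin n)) := ∫ ω, f ω ∂μ with hAop
  have hAnorm : ‖Aop‖ ≤ 1 := by
    have := norm_integral_le_of_norm_le_const (μ := μ) (f := f) (C := 1)
      (Filter.Eventually.of_forall hfnorm)
    rwa [probReal_univ, mul_one] at this
  have hXsa : ∀ ω, star (X ω) = X ω := by
    intro ω
    rw [hX]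
    show star (star (U ω) * H * U ω) = _
    simp [star_mul, mul_assoc, hH.star_eq]
  have hHeffsa : IsSelfAdjoint Heff := by
    have hcomm := ((starL' ℝ : (EuclideanSpace ℂ (Fin n) →L[ℂ] EuclideanSpace ℂ (Fin n)) ≃L[ℝ] (EuclideanSpace ℂ (Fin n) →L[ℂ] EuclideanSpace ℂ (Fin n))).toContinuousLinearMap).integral_comp_comm hint
    have happ : ∀ y : (EuclideanSpace ℂ (Fin n) →L[ℂ] EuclideanSpace ℂ (Fin n)),
        ((starL' ℝ : (EuclideanSpace ℂ (Fin n) →L[ℂ] EuclideanSpace ℂ (Fin n)) ≃L[ℝ] (EuclideanSpace ℂ (Fin n) →L[ℂ] EuclideanSpace ℂ (Fin n))).toContinuousLinearMap) y = star y := fun y => rfl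
    rw [IsSelfAdjoint, hHeff]
    calc star (∫ ω, X ω ∂μ)
        = ((starL' ℝ : (EuclideanSpace ℂ (Fin n) →L[ℂ] EuclideanSpace ℂ (Fin n)) ≃L[ℝ] (EuclideanSpace ℂ (Fin n) →L[ℂ] EuclideanSpace ℂ (Fin n))).toContinuousLinearMap) (∫ ω, X ω ∂μ) := (happ _).symm
      _ = ∫ ω, ((starL' ℝ : (EuclideanSpace ℂ (Fin n) →L[ℂ] EuclideanSpace ℂ (Fin n)) ≃L[ℝ] (EuclideanSpace ℂ (Fin n) →L[ℂ] EuclideanSpace ℂ (Fin n))).toContinuousLinearMap) (X ω) ∂μ := hcomm.symm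
      _ = ∫ ω, X ω ∂μ := integral_congr_ae
            (Filter.Eventually.of_forall fun ω => (happ (X ω)).trans (hXsa ω))
  set Bop : (EuclideanSpace ℂ (Fin n) →L[ℂ] EuclideanSpace ℂ (Fin n)) := NormedSpace.exp (c • Heff) with hBop
  have hBu : Bop ∈ unitary (EuclideanSpace ℂ (Fin n) →L[ℂ] EuclideanSpace ℂ (Fin n)) := exp_mem_unitary_of_mem_skewAdjoint (hskew Heff hHeffsa)
  have hBnorm : ‖Bop‖ ≤ 1 := my_unitary_norm_le hBu
  have hHeffnorm : ‖Heff‖ ≤ ‖H‖ := by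
    rw [hHeff]
    have := norm_integral_le_of_norm_le_const (μ := μ) (f := X) (C := ‖H‖)
      (Filter.Eventually.of_forall hXnorm)
    rwa [probReal_univ, mul_one] at this
  have hcHeff : ‖c • Heff‖ ≤ m := by
    have h1 : ‖c • Heff‖ = ‖c‖ * ‖Heff‖ := norm_smul c Heff
    rw [h1, hcnorm, hmτ]
    gcongr
  have hstep : ∀ C : ℝ, (∀ M : (EuclideanSpace ℂ (Fin n) →L[ℂ] EuclideanSpace ℂ (Fin n)), ‖M‖ ≤ m → ‖NormedSpace.exp M - 1 - M‖ ≤ C) →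
      ‖Aop - Bop‖ ≤ 2 * C := by
    intro C hC
    have hint' : Integrable (fun ω => c • X ω) μ := hint.smul c
    have hsplit : (∫ ω, (f ω - 1 - c • X ω) ∂μ) = Aop - (1 + c • Heff) := by
      have e1 : (∫ ω, (f ω - 1 - c • X ω) ∂μ)
          = (∫ ω, (f ω - 1) ∂μ) - ∫ ω, c • X ω ∂μ :=
        integral_sub (hfint.sub (integrable_const 1)) hint'
      have e2 : (∫ ω, (f ω - 1) ∂μ)
          = (∫ ω, f ω ∂μ) - ∫ (_ : Ω), (1 : EuclideanSpace ℂ (Fin n) →L[ℂ] EuclideanSpace ℂ (Fin n)) ∂μ :=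
        integral_sub hfint (integrable_const 1)
      rw [e1, e2, integral_const, integral_smul, probReal_univ, one_smul,
        hHeff, hAop]
      abel
    have h1 : ‖Aop - (1 + c • Heff)‖ ≤ C := by
      rw [← hsplit]
      have := norm_integral_le_of_norm_le_const (μ := μ)
        (f := fun ω => f ω - 1 - c • X ω) (C := C)
        (Filter.Eventually.of_forall fun ω => by
          show ‖f ω - 1 - c • X ω‖ ≤ C
          rw [hfX ω]; exact hC (c • X ω) (hXm ω))
      rwa [probReal_univ, mul_one] at this
    have h2 : ‖Bop - (1 + c • Heff)‖ ≤ C := by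
      have := hC (c • Heff) hcHeff
      rw [sub_sub] at this
      exact this
    calc ‖Aop - Bop‖ = ‖(Aop - (1 + c • Heff)) - (Bop - (1 + c • Heff))‖ := by
          congr 1; abel
      _ ≤ ‖Aop - (1 + c • Heff)‖ + ‖Bop - (1 + c • Heff)‖ := norm_sub_le _ _
      _ ≤ C + C := add_le_add h1 h2
      _ = 2 * C := by ring
  obtain ⟨hprodint, hprodval⟩ :=
    my_integral_ofFn_prod (μ := μ) my_norm_one_le f hfaesm hfnorm r
  have hBpow : NormedSpace.exp ((-(Complex.I * t)) • Heff) = Bop ^ r := by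
    rw [hBop, ← NormedSpace.exp_nsmul, ← Nat.cast_smul_eq_nsmul ℂ, smul_smul]
    congr 2
    rw [hc]
    field_simp
  have hlhs : (∫ ω : Fin r → Ω,
      (List.ofFn fun l : Fin r =>
        star (U (ω l)) * NormedSpace.exp ((-(Complex.I * ((t : ℂ) / r))) • H) * U (ω l)).prod
        ∂(Measure.pi fun _ => μ)) = Aop ^ r := by
    rw [← hprodval]
  have hpow := my_pow_sub_pow Aop Bop hAnorm hBnorm r
  have main : ∀ C : ℝ, (∀ M : (EuclideanSpace ℂ (Fin n) →L[ℂ] EuclideanSpace ℂ (Fin n)), ‖M‖ ≤ m → ‖NormedSpace.exp M - 1 - M‖ ≤ C) →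
      ‖(∫ ω : Fin r → Ω,
        (List.ofFn fun l : Fin r =>
          star (U (ω l)) * NormedSpace.exp ((-(Complex.I * ((t : ℂ) / r))) • H) * U (ω l)).prod
          ∂(Measure.pi fun _ => μ)) - NormedSpace.exp ((-(Complex.I * t)) • Heff)‖
        ≤ r * (2 * C) := by
    intro C hC
    rw [hlhs, hBpow]
    calc ‖Aop ^ r - Bop ^ r‖ ≤ r * ‖Aop - Bop‖ := hpow
      _ ≤ r * (2 * C) := by
          have := hstep C hC
          have hr0 : (0 : ℝ) ≤ r := hrpos.le
          nlinarith [norm_nonneg (Aop - Bop)]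
  constructor
  · have h := main (m ^ 2 / 2 * Real.exp m) (fun M hM => rem_exp M m hM)
    refine h.trans ?_
    rw [hm]
    rw [show (r : ℝ) * (2 * ((‖H‖ * t / r) ^ 2 / 2 * Real.exp (‖H‖ * t / r)))
      = ‖H‖ ^ 2 * Real.exp (‖H‖ * t / r) * t ^ 2 / r by field_simp]
  · intro hcond
    have hm1 : m ≤ 1 := by rw [hm]; rw [div_le_one hrpos]; exact hcond
    have h := main (m ^ 2) (fun M hM => rem_small M m hM hm1)
    refine h.trans ?_
    rw [hm]
    rw [show (r : ℝ) * (2 * (‖H‖ * t / r) ^ 2) = 2 * ‖H‖ ^ 2 * t ^ 2 / r * ((r:ℝ)/r) by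
      field_simp]
    rw [div_self hrne, mul_one]
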